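/- The set R of infinite-volume allowed configurations on the rootless binary tree is a perfect uncountable set: R is uncountable, and for every η ∈ R there exists a sequence η_n ∈ R with η_n ≠ η for all n and η_n → η in the product topology. -/

import Mathlib

open Finset

/-- `S` is the vertex set of the rootless binary tree: a connected acyclic simple
graph in which every vertex has exactly 3 neighbours. -/
def IsBinaryTree {S : Type*} (G : SimpleGraph S) : Prop :=
  G.Connected ∧ G.IsAcyclic ∧ ∀ v : S, {w : S | G.Adj v w}.ncard = 3

variable {S : Type*} [DecidableEq S]

/-- A configuration `η : S → Fin 3` (site `x` having height `(η x : ℕ) + 1 ∈ {1,2,3}`)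
contains a forbidden subconfiguration in the finite volume `V`: there is a nonempty
`W ⊆ V` such that every `x ∈ W` has height at most the number of its neighbours
in `W`. -/
def HasFSC3 (G : SimpleGraph S) [DecidableRel G.Adj] (V : Finset S)
    (η : S → Fin 3) : Prop :=
  ∃ W : Finset S, W ⊆ V ∧ W.Nonempty ∧
    ∀ x ∈ W, (η x : ℕ) + 1 ≤ (W.filter (fun y => y ≠ x ∧ G.Adj x y)).card

/-- The set `R` of infinite-volume allowed configurations in `Ω = {1,2,3}^S`:
those whose restriction to every finite volume is allowed. -/
def RecSet (G : SimpleGraph S) [DecidableRel G.Adj] : Set (S → Fin 3) :=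
  {η | ∀ V : Finset S, V.Nonempty → ¬ HasFSC3 G V η}


namespace BinTreeAux

variable {S : Type*} [DecidableEq S] {G : SimpleGraph S} [DecidableRel G.Adj]

/-- In a finite nonempty vertex set of an acyclic graph, some vertex has at most one
neighbour inside the set. -/
lemma exists_low_degree (hac : G.IsAcyclic) (W : Finset S) (hW : W.Nonempty) :
    ∃ x ∈ W, (W.filter (fun y => G.Adj x y)).card ≤ 1 := by
  classical
  by_contra hcon
  push_neg at hcon
  set P : ℕ → Prop := fun n => ∃ (u v : S) (p : G.Walk u v),
    p.IsPath ∧ (∀ x ∈ p.support, x ∈ W) ∧ p.length = n with hP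
  have hbound : ∀ n, P n → n ≤ W.card := by
    rintro n ⟨u, v, p, hp, hsup, hlen⟩
    have h1 : p.support.toFinset.card = p.support.length :=
      List.toFinset_card_of_nodup hp.support_nodup
    have h2 : p.support.toFinset ⊆ W := by
      intro x hx
      exact hsup x (List.mem_toFinset.mp hx)
    have h3 := Finset.card_le_card h2
    rw [h1, SimpleGraph.Walk.length_support] at h3
    omega
  obtain ⟨w₀, hw₀⟩ := hW
  have hP0 : P 0 := ⟨w₀, w₀, SimpleGraph.Walk.nil, SimpleGraph.Walk.IsPath.nil,
    by simp [hw₀], rfl⟩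
  set N := Nat.findGreatest P W.card with hN
  have hPN : P N := Nat.findGreatest_spec (Nat.zero_le _) hP0
  obtain ⟨u, v, p, hp, hsup, hlen⟩ := hPN
  have hu : u ∈ W := hsup u p.start_mem_support
  have hnbr : ∀ w ∈ W.filter (fun y => G.Adj u y), w ∈ p.support := by
    intro w hw
    rw [Finset.mem_filter] at hw
    by_contra hns
    have hp' : (SimpleGraph.Walk.cons hw.2.symm p).IsPath :=
      (SimpleGraph.Walk.cons_isPath_iff _ _).2 ⟨hp, hns⟩
    have hPn1 : P (N + 1) := by
      refine ⟨w, v, SimpleGraph.Walk.cons hw.2.symm p, hp', ?_, by simp [hlen]⟩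
      intro x hx
      rw [SimpleGraph.Walk.support_cons, List.mem_cons] at hx
      rcases hx with rfl | hx
      · exact hw.1
      · exact hsup x hx
    have := Nat.le_findGreatest (hbound _ hPn1) hPn1
    omega
  obtain ⟨y, hy, z, hz, hyz⟩ := Finset.one_lt_card.mp (hcon u hu)
  cases p with
  | nil =>
    have hy' := hnbr y hy
    simp only [SimpleGraph.Walk.support_nil, List.mem_singleton] at hy'
    have : G.Adj u y := (Finset.mem_filter.mp hy).2
    exact this.ne hy'.symm
  | cons hub q =>
    rename_i b
    -- choose a neighbour y' of u distinct from b
    obtain ⟨y', hy'f, hy'b⟩ : ∃ y', y' ∈ W.filter (fun y => G.Adj u y) ∧ y' ≠ b := by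
      by_cases hyb : y = b
      · exact ⟨z, hz, by rw [← hyb]; exact fun h => hyz h.symm⟩
      · exact ⟨y, hy, hyb⟩
    have hadj : G.Adj u y' := (Finset.mem_filter.mp hy'f).2
    have hmem : y' ∈ (SimpleGraph.Walk.cons hub q).support := hnbr y' hy'f
    set r := (SimpleGraph.Walk.cons hub q).takeUntil y' hmem with hr
    have hrp : r.IsPath := hp.takeUntil hmem
    have hedge : s(y', u) ∉ r.edges := by
      intro he
      have h2 := SimpleGraph.Walk.edges_takeUntil_subset _ hmem he
      rw [SimpleGraph.Walk.edges_cons, List.mem_cons] at h2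
      rcases h2 with h2 | h2
      · rw [Sym2.eq_iff] at h2
        rcases h2 with ⟨h3, _⟩ | ⟨h3, _⟩
        · exact hadj.ne' h3
        · exact hy'b h3
      · have hus : u ∈ q.support := SimpleGraph.Walk.snd_mem_support_of_mem_edges q h2
        have := (SimpleGraph.Walk.cons_isPath_iff _ _).1 hp
        exact this.2 hus
    exact hac _ ((SimpleGraph.Walk.cons_isCycle_iff r hadj.symm).2 ⟨hrp, hedge⟩)

/-- Forest bound: within a finite nonempty set of an acyclic graph, the sum of the internal
degrees is at most `2 * card - 2`. -/
lemma degree_sum_bound (hac : G.IsAcyclic) (W : Finset S) :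
    W.Nonempty → (∑ x ∈ W, (W.filter (fun y => G.Adj x y)).card) + 2 ≤ 2 * W.card := by
  classical
  induction W using Finset.strongInductionOn with
  | _ W ih =>
    intro hW
    obtain ⟨x₀, hx₀, hd⟩ := exists_low_degree hac W hW
    by_cases hW' : (W.erase x₀).Nonempty
    · have hIH := ih _ (Finset.erase_ssubset hx₀) hW'
      have hsplit : (W.filter (fun y => G.Adj x₀ y)).card
          + ∑ x ∈ W.erase x₀, (W.filter (fun y => G.Adj x y)).card
          = ∑ x ∈ W, (W.filter (fun y => G.Adj x y)).card :=
        Finset.add_sum_erase W (fun x => (W.filter (fun y => G.Adj x y)).card) hx₀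
      have hterm : ∀ x ∈ W.erase x₀, (W.filter (fun y => G.Adj x y)).card
          ≤ ((W.erase x₀).filter (fun y => G.Adj x y)).card + (if G.Adj x x₀ then 1 else 0) := by
        intro x hx
        conv_lhs => rw [← Finset.insert_erase hx₀]
        rw [Finset.filter_insert]
        split
        · exact (Finset.card_insert_le _ _).trans (by omega)
        · simp
      have hsum2 : ∑ x ∈ W.erase x₀, (W.filter (fun y => G.Adj x y)).card
          ≤ (∑ x ∈ W.erase x₀, ((W.erase x₀).filter (fun y => G.Adj x y)).card)
            + ((W.erase x₀).filter (fun x => G.Adj x x₀)).card := by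
        calc ∑ x ∈ W.erase x₀, (W.filter (fun y => G.Adj x y)).card
            ≤ ∑ x ∈ W.erase x₀, (((W.erase x₀).filter (fun y => G.Adj x y)).card
              + (if G.Adj x x₀ then 1 else 0)) := Finset.sum_le_sum hterm
          _ = (∑ x ∈ W.erase x₀, ((W.erase x₀).filter (fun y => G.Adj x y)).card)
              + ∑ x ∈ W.erase x₀, (if G.Adj x x₀ then 1 else 0) := Finset.sum_add_distrib
          _ = _ := by
              congr 1
              exact (Finset.card_filter _ _).symm
      have hback : ((W.erase x₀).filter (fun x => G.Adj x x₀)).card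
          ≤ (W.filter (fun y => G.Adj x₀ y)).card := by
        apply Finset.card_le_card
        intro x hx
        rw [Finset.mem_filter] at hx ⊢
        exact ⟨Finset.mem_of_mem_erase hx.1, hx.2.symm⟩
      have hcard : (W.erase x₀).card + 1 = W.card := by
        rw [Finset.card_erase_of_mem hx₀]
        have : 1 ≤ W.card := Finset.card_pos.mpr hW
        omega
      omega
    · rw [Finset.not_nonempty_iff_eq_empty, Finset.erase_eq_empty_iff] at hW'
      rcases hW' with rfl | rfl
      · exact absurd hW (by simp)
      · simp [Finset.filter_singleton, G.irrefl]

lemma filter_ne_adj (W : Finset S) (x : S) :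
    W.filter (fun y => y ≠ x ∧ G.Adj x y) = W.filter (fun y => G.Adj x y) := by
  ext y
  simp only [Finset.mem_filter]
  exact ⟨fun ⟨h1, _, h3⟩ => ⟨h1, h3⟩, fun ⟨h1, h2⟩ => ⟨h1, h2.ne', h2⟩⟩

/-- The restriction of `G` to a finite vertex set. -/
def restrictG (G : SimpleGraph S) (W : Finset S) : SimpleGraph S where
  Adj x y := G.Adj x y ∧ x ∈ W ∧ y ∈ W
  symm := ⟨fun x y h => ⟨h.1.symm, h.2.2, h.2.1⟩⟩
  loopless := ⟨fun x h => G.irrefl h.1⟩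

lemma restrict_le (W : Finset S) : restrictG G W ≤ G := fun _ _ h => h.1

lemma restrict_support (W : Finset S) {u b : S} (p : (restrictG G W).Walk u b)
    (hu : u ∈ W) : ∀ x ∈ p.support, x ∈ W := by
  induction p with
  | nil => intro x hx; simp only [SimpleGraph.Walk.support_nil, List.mem_singleton] at hx
           subst hx; exact hu
  | cons h q ih =>
    intro x hx
    rw [SimpleGraph.Walk.support_cons, List.mem_cons] at hx
    rcases hx with rfl | hx
    · exact hu
    · exact ih h.2.2 x hx

/-- Key structural lemma: if a finite set `W` supports a forbidden subconfiguration for the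
height function `f` and `v ∈ W`, then there is a vertex `a` with `f a = 0` joined to `v` by a
walk whose length is at most twice the number of low (`f ≤ 1`) vertices of `W`. -/
lemma key_lemma (hac : G.IsAcyclic) (W : Finset S) (f : S → ℕ)
    (hdeg : ∀ x ∈ W, f x + 1 ≤ (W.filter (fun y => G.Adj x y)).card)
    {v : S} (hv : v ∈ W) :
    ∃ a, f a = 0 ∧ ∃ p : G.Walk v a,
      p.length ≤ 2 * (W.filter (fun x => f x ≤ 1)).card := by
  classical
  set G' := restrictG G W with hG'
  have hac' : G'.IsAcyclic := fun u c hc => hac _ (hc.mapLe (restrict_le W))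
  set C := W.filter (fun x => G'.Reachable v x) with hC
  have hCsub : C ⊆ W := Finset.filter_subset _ _
  have hvC : v ∈ C := Finset.mem_filter.2 ⟨hv, SimpleGraph.Reachable.refl v⟩
  have hclosed : ∀ x ∈ C, ∀ y ∈ W, G.Adj x y → y ∈ C := by
    intro x hx y hy hadj
    rw [Finset.mem_filter] at hx ⊢
    exact ⟨hy, hx.2.trans (SimpleGraph.Adj.reachable ⟨hadj, hx.1, hy⟩)⟩
  have hdegC : ∀ x ∈ C, W.filter (fun y => G.Adj x y) = C.filter (fun y => G.Adj x y) := by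
    intro x hx
    apply Finset.Subset.antisymm
    · intro y hy
      rw [Finset.mem_filter] at hy ⊢
      exact ⟨hclosed x hx y hy.1 hy.2, hy.2⟩
    · exact Finset.filter_subset_filter _ hCsub
  have hdeg' : ∀ x ∈ C, f x + 1 ≤ (C.filter (fun y => G.Adj x y)).card := by
    intro x hx
    rw [← hdegC x hx]
    exact hdeg x (hCsub hx)
  have hsum := degree_sum_bound hac C ⟨v, hvC⟩
  have hsum2 : ∑ x ∈ C, (f x + 1) ≤ ∑ x ∈ C, (C.filter (fun y => G.Adj x y)).card :=
    Finset.sum_le_sum hdeg'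
  have hzero : ∃ a ∈ C, f a = 0 := by
    by_contra hcon
    push_neg at hcon
    have h2 : ∀ x ∈ C, 2 ≤ f x + 1 := by
      intro x hx
      have := hcon x hx
      omega
    have h3 : 2 * C.card ≤ ∑ x ∈ C, (f x + 1) := by
      calc 2 * C.card = ∑ _x ∈ C, 2 := by rw [Finset.sum_const, smul_eq_mul, mul_comm]
        _ ≤ _ := Finset.sum_le_sum h2
    omega
  -- size bound on the component C
  have hKm : (C.filter (fun x => f x ≤ 1)).card + (C.filter (fun x => ¬ f x ≤ 1)).card
      = C.card := Finset.card_filter_add_card_filter_not _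
  have hlow : (C.filter (fun x => f x ≤ 1)).card * 1
      + (C.filter (fun x => ¬ f x ≤ 1)).card * 3 ≤ ∑ x ∈ C, (f x + 1) := by
    rw [← Finset.sum_filter_add_sum_filter_not C (fun x => f x ≤ 1) (fun x => f x + 1)]
    have e1 : (C.filter (fun x => f x ≤ 1)).card * 1
        ≤ ∑ x ∈ C.filter (fun x => f x ≤ 1), (f x + 1) := by
      rw [mul_one]
      calc (C.filter (fun x => f x ≤ 1)).card
          = ∑ _x ∈ C.filter (fun x => f x ≤ 1), 1 := by rw [Finset.sum_const, smul_eq_mul, mul_one]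
        _ ≤ _ := Finset.sum_le_sum (fun x _ => by omega)
    have e2 : (C.filter (fun x => ¬ f x ≤ 1)).card * 3
        ≤ ∑ x ∈ C.filter (fun x => ¬ f x ≤ 1), (f x + 1) := by
      calc (C.filter (fun x => ¬ f x ≤ 1)).card * 3
          = ∑ _x ∈ C.filter (fun x => ¬ f x ≤ 1), 3 := by rw [Finset.sum_const, smul_eq_mul]
        _ ≤ _ := Finset.sum_le_sum (fun x hx => by
            have := (Finset.mem_filter.mp hx).2
            omega)
    omega
  have hCcard : C.card ≤ 2 * (C.filter (fun x => f x ≤ 1)).card := by omega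
  obtain ⟨a, haC, haf⟩ := hzero
  obtain ⟨w⟩ : G'.Reachable v a := (Finset.mem_filter.mp haC).2
  set p := w.bypass with hp'
  have hp : p.IsPath := w.bypass_isPath
  have hsupC : ∀ x ∈ p.support, x ∈ C := by
    intro x hx
    have hxW : x ∈ W := restrict_support W p hv x hx
    exact Finset.mem_filter.2 ⟨hxW, ⟨p.takeUntil x hx⟩⟩
  have hlen : p.length + 1 ≤ C.card := by
    have h1 : p.support.toFinset.card = p.support.length :=
      List.toFinset_card_of_nodup hp.support_nodup
    have h2 : p.support.toFinset ⊆ C := fun x hx => hsupC x (List.mem_toFinset.mp hx)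
    have h3 := Finset.card_le_card h2
    rw [h1, SimpleGraph.Walk.length_support] at h3
    exact h3
  refine ⟨a, haf, p.mapLe (restrict_le W), ?_⟩
  rw [SimpleGraph.Walk.length_map]
  have hKK : (C.filter (fun x => f x ≤ 1)).card ≤ (W.filter (fun x => f x ≤ 1)).card :=
    Finset.card_le_card (Finset.filter_subset_filter _ hCsub)
  omega

/-- Any configuration with all heights at least 2 is allowed. -/
lemma mem_recSet_of_one_le (hac : G.IsAcyclic) {η : S → Fin 3}
    (h1 : ∀ x, 1 ≤ (η x : ℕ)) : η ∈ RecSet G := by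
  intro V hV hF
  obtain ⟨W, hWV, hWne, hcond⟩ := hF
  have hcond' : ∀ x ∈ W, (η x : ℕ) + 1 ≤ (W.filter (fun y => G.Adj x y)).card := by
    intro x hx
    rw [← filter_ne_adj W x]
    exact hcond x hx
  have h2 : 2 * W.card ≤ ∑ x ∈ W, (W.filter (fun y => G.Adj x y)).card := by
    calc 2 * W.card = ∑ _x ∈ W, 2 := by rw [Finset.sum_const, smul_eq_mul, mul_comm]
      _ ≤ ∑ x ∈ W, ((η x : ℕ) + 1) := Finset.sum_le_sum (fun x _ => by have := h1 x; omega)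
      _ ≤ _ := Finset.sum_le_sum hcond'
  have := degree_sum_bound hac W hWne
  omega

/-- Monotonicity: raising heights preserves being allowed. -/
lemma recSet_mono {η η' : S → Fin 3} (hη : η ∈ RecSet G)
    (h : ∀ x, (η x : ℕ) ≤ (η' x : ℕ)) : η' ∈ RecSet G := by
  intro V hV hF
  obtain ⟨W, hWV, hWne, hcond⟩ := hF
  exact hη W hWne ⟨W, Finset.Subset.refl W, hWne,
    fun x hx => le_trans (by have := h x; omega) (hcond x hx)⟩

/-- The vertex set of a connected acyclic graph with all degrees `3` is infinite. -/
lemma infinite_S (hconn : G.Connected) (hac : G.IsAcyclic)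
    (hdeg3 : ∀ v : S, {w : S | G.Adj v w}.ncard = 3) : Infinite S := by
  by_contra h
  rw [not_infinite_iff_finite] at h
  haveI := Fintype.ofFinite S
  haveI : Nonempty S := hconn.nonempty
  have hne : (Finset.univ : Finset S).Nonempty := Finset.univ_nonempty
  have hdeg : ∀ x : S, ((Finset.univ : Finset S).filter (fun y => G.Adj x y)).card = 3 := by
    intro x
    rw [← hdeg3 x, ← Set.ncard_coe_finset]
    congr 1
    ext y
    simp
  have hb := degree_sum_bound hac (Finset.univ : Finset S) hne
  rw [Finset.sum_congr rfl (fun x _ => hdeg x), Finset.sum_const, smul_eq_mul] at hb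
  have hcard : 1 ≤ (Finset.univ : Finset S).card := Finset.card_pos.mpr hne
  omega

/-- Balls (via an abstract neighbour function). -/
def ballF (nb : S → Finset S) (a : S) : ℕ → Finset S
  | 0 => {a}
  | n + 1 => ballF nb a n ∪ (ballF nb a n).biUnion nb

lemma mem_ballF {nb : S → Finset S} (hnb : ∀ u w : S, G.Adj u w → w ∈ nb u) (a : S) :
    ∀ (n : ℕ) {x : S} (p : G.Walk x a), p.length ≤ n → x ∈ ballF nb a n := by
  intro n
  induction n with
  | zero =>
    intro x p hlen
    have : x = a := p.eq_of_length_eq_zero (Nat.le_zero.mp hlen)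
    subst this
    simp [ballF]
  | succ n ih =>
    intro x p hlen
    cases p with
    | nil =>
      have : a ∈ ballF nb a n := ih SimpleGraph.Walk.nil (Nat.zero_le _)
      exact Finset.mem_union_left _ this
    | cons h q =>
      rw [SimpleGraph.Walk.length_cons] at hlen
      have hq : _ ∈ ballF nb a n := ih q (by omega)
      apply Finset.mem_union_right
      exact Finset.mem_biUnion.mpr ⟨_, hq, hnb _ _ h.symm⟩

lemma tendsto_update (η : S → Fin 3) (c : ℕ → S) (hc : Function.Injective c)
    (b : ℕ → Fin 3) :
    Filter.Tendsto (fun n => Function.update η (c n) (b n)) Filter.atTop (nhds η) := by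
  rw [tendsto_pi_nhds]
  intro x
  apply tendsto_nhds_of_eventually_eq
  have hfin : {n : ℕ | c n = x}.Finite :=
    Set.Subsingleton.finite (fun m hm k hk => hc (hm.trans hk.symm))
  have hev := hfin.eventually_cofinite_notMem
  rw [Nat.cofinite_eq_atTop] at hev
  exact hev.mono (fun n hn => Function.update_of_ne (fun h => hn h.symm) _ _)

end BinTreeAux


/-- The set `R` of infinite-volume allowed configurations is a perfect uncountable
set: it is uncountable, and every `η ∈ R` is the limit of a sequence of elements
of `R` distinct from `η`. -/
theorem recSet_uncountable_perfect (G : SimpleGraph S) [DecidableRel G.Adj]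
    (hG : IsBinaryTree G) :
    ¬ (RecSet G).Countable ∧
    ∀ η ∈ RecSet G, ∃ seq : ℕ → (S → Fin 3),
      (∀ n : ℕ, seq n ∈ RecSet G ∧ seq n ≠ η) ∧
      Filter.Tendsto seq Filter.atTop (nhds η) := by
  classical
  obtain ⟨hconn, hac, hdeg3⟩ := hG
  haveI hinfS : Infinite S := BinTreeAux.infinite_S hconn hac hdeg3
  constructor
  · -- uncountability
    intro hc
    set g : Set S → (S → Fin 3) := fun A x => if x ∈ A then 1 else 2 with hg
    have hg_mem : ∀ A : Set S, g A ∈ RecSet G := by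
      intro A
      apply BinTreeAux.mem_recSet_of_one_le hac
      intro x
      simp only [hg]
      split <;> simp
    have hg_inj : Function.Injective g := by
      intro A B hAB
      ext x
      have := congrFun hAB x
      simp only [hg] at this
      by_cases hA : x ∈ A <;> by_cases hB : x ∈ B <;>
        simp [hA, hB] at this ⊢ <;> exact absurd this (by decide)
    have hcount : Countable (Set S) := by
      haveI := hc.to_subtype
      exact Function.Injective.countable
        (f := fun A : Set S => (⟨g A, hg_mem A⟩ : ↥(RecSet G)))
        (fun A B h => hg_inj (congrArg Subtype.val h))
    obtain ⟨embN⟩ := countable_iff_nonempty_embedding.mp hcount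
    exact Function.cantor_injective (fun A => Infinite.natEmbedding S (embN A))
      ((Infinite.natEmbedding S).injective.comp embN.injective)
  · -- perfectness
    intro η hη
    by_cases hcase : {v : S | η v ≠ 2}.Infinite
    · -- infinitely many non-maximal sites: raise a far one to 2
      set e := hcase.natEmbedding with he
      set c : ℕ → S := fun n => (e n : S) with hc
      have hcinj : Function.Injective c := fun a b h => e.injective (Subtype.ext h)
      refine ⟨fun n => Function.update η (c n) 2, fun n => ⟨?_, ?_⟩, ?_⟩
      · show Function.update η (c n) 2 ∈ RecSet G
        apply BinTreeAux.recSet_mono hη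
        intro x
        by_cases hx : x = c n
        · subst hx
          rw [Function.update_self]
          have h2 := (η (c n)).is_lt
          have h3 : ((2 : Fin 3) : ℕ) = 2 := rfl
          omega
        · rw [Function.update_of_ne hx]
      · show Function.update η (c n) 2 ≠ η
        intro hEq
        apply (e n).2
        have := congrFun hEq (c n)
        rw [Function.update_self] at this
        exact this.symm
      · exact BinTreeAux.tendsto_update η c hcinj _
    · -- cofinitely many maximal sites: lower a far one to 1
      have hAfin : {v : S | η v ≠ 2}.Finite := Set.not_infinite.mp hcase
      set A : Finset S := hAfin.toFinset with hA
      set r : ℕ := 2 * (A.card + 1) with hr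
      have hfo : ∀ v : S, {w : S | G.Adj v w}.Finite := fun v =>
        Set.finite_of_ncard_ne_zero (by rw [hdeg3 v]; omega)
      set nb : S → Finset S := fun v => (hfo v).toFinset with hnb
      have hnb' : ∀ u w : S, G.Adj u w → w ∈ nb u := by
        intro u w h
        simp only [hnb, Set.Finite.mem_toFinset, Set.mem_setOf_eq]
        exact h
      set bad : Finset S := A ∪ A.biUnion (fun a => BinTreeAux.ballF nb a r) with hbad
      have hgood : (↑bad : Set S)ᶜ.Infinite := bad.finite_toSet.infinite_compl
      set e := hgood.natEmbedding with he
      set c : ℕ → S := fun n => (e n : S) with hc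
      have hcinj : Function.Injective c := fun a b h => e.injective (Subtype.ext h)
      have hcbad : ∀ n, c n ∉ bad := by
        intro n hmem
        exact (e n).2 (Finset.mem_coe.mpr hmem)
      have hcA : ∀ n, c n ∉ A := fun n h => hcbad n (Finset.mem_union_left _ h)
      have hval : ∀ n, η (c n) = 2 := by
        intro n
        by_contra h
        exact hcA n (hAfin.mem_toFinset.mpr h)
      refine ⟨fun n => Function.update η (c n) 1, fun n => ⟨?_, ?_⟩, ?_⟩
      · -- membership in RecSet
        show Function.update η (c n) 1 ∈ RecSet G
        intro V hV hF
        obtain ⟨W, hWV, hWne, hcond⟩ := hF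
        by_cases hvW : c n ∈ W
        · have hcond' : ∀ x ∈ W,
              ((Function.update η (c n) 1 x : Fin 3) : ℕ) + 1
                ≤ (W.filter (fun y => G.Adj x y)).card := by
            intro x hx
            rw [← BinTreeAux.filter_ne_adj W x]
            exact hcond x hx
          obtain ⟨a, ha0, p, hplen⟩ := BinTreeAux.key_lemma hac W
            (fun x => ((Function.update η (c n) 1 x : Fin 3) : ℕ)) hcond' hvW
          have hane : a ≠ c n := by
            intro h
            rw [h, Function.update_self] at ha0
            simp at ha0
          have haA : a ∈ A := by
            rw [Function.update_of_ne hane] at ha0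
            apply hAfin.mem_toFinset.mpr
            intro h
            rw [h] at ha0
            simp at ha0
          have hKle : (W.filter
              (fun x => ((Function.update η (c n) 1 x : Fin 3) : ℕ) ≤ 1)).card
              ≤ A.card + 1 := by
            have hsub : W.filter
                (fun x => ((Function.update η (c n) 1 x : Fin 3) : ℕ) ≤ 1)
                ⊆ insert (c n) A := by
              intro x hx
              obtain ⟨hxW, hx1⟩ := Finset.mem_filter.mp hx
              by_cases hxc : x = c n
              · exact Finset.mem_insert.mpr (Or.inl hxc)
              · rw [Function.update_of_ne hxc] at hx1
                refine Finset.mem_insert.mpr (Or.inr (hAfin.mem_toFinset.mpr ?_))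
                intro h
                rw [h] at hx1
                simp at hx1
            calc _ ≤ (insert (c n) A).card := Finset.card_le_card hsub
              _ ≤ A.card + 1 := Finset.card_insert_le _ _
          have hlen' : p.length ≤ r := by
            rw [hr]
            omega
          have hball : c n ∈ BinTreeAux.ballF nb a r :=
            BinTreeAux.mem_ballF hnb' a r p hlen'
          exact hcbad n (Finset.mem_union_right _ (Finset.mem_biUnion.mpr ⟨a, haA, hball⟩))
        · apply hη W hWne
          refine ⟨W, Finset.Subset.refl W, hWne, fun x hx => ?_⟩
          have hxc : x ≠ c n := fun h => hvW (h ▸ hx)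
          have := hcond x hx
          rwa [Function.update_of_ne hxc] at this
      · show Function.update η (c n) 1 ≠ η
        intro hEq
        have := congrFun hEq (c n)
        rw [Function.update_self, hval n] at this
        exact absurd this (by decide)
      · exact BinTreeAux.tendsto_update η c hcinj _
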